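/- The convertibility pre-order induced by type-preserving noncontextual wirings on the set of non-disturbing n-cycle behaviors is not totally pre-ordered: there exist non-disturbing n-cycle behaviors B₁ and B₂ that are incomparable, i.e., neither B₁ → B₂ nor B₂ → B₁ holds. -/

import Mathlib

open Finset

/-- The outcome value `±1` encoded by a `Bool`. -/
def sval (b : Bool) : ℝ := if b then 1 else -1

/-- An `n`-cycle behavior: for each context `{X_i, X_{i+1}}` (`i ∈ ZMod n`) a
probability distribution `p i` on pairs of `±1` outcomes (encoded as `Bool`s). -/
def IsNCycleBehavior (n : ℕ) (p : ZMod n → Bool → Bool → ℝ) : Prop :=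
  (∀ i a b, 0 ≤ p i a b) ∧ ∀ i : ZMod n, ∑ a : Bool, ∑ b : Bool, p i a b = 1

/-- Non-disturbance: for all `i` and `b`, `Σ_a p_i(a,b) = Σ_c p_{i+1}(b,c)`. -/
def NCycleNonDisturbing (n : ℕ) (p : ZMod n → Bool → Bool → ℝ) : Prop :=
  ∀ (i : ZMod n) (b : Bool), ∑ a : Bool, p i a b = ∑ c : Bool, p (i + 1) b c

/-- Noncontextuality: existence of a global probability distribution `q` on
`ZMod n → Bool` whose marginals reproduce all the `p i`. -/
def NCycleNoncontextual (n : ℕ) [NeZero n] (p : ZMod n → Bool → Bool → ℝ) : Prop :=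
  ∃ q : (ZMod n → Bool) → ℝ, (∀ x, 0 ≤ q x) ∧ (∑ x : ZMod n → Bool, q x = 1) ∧
    ∀ (i : ZMod n) (a b : Bool),
      p i a b = ∑ x : ZMod n → Bool, (if x i = a ∧ x (i + 1) = b then q x else 0)

/-- A sign vector: `γ : ZMod n → {-1, 1}` with an odd number of entries equal to `-1`. -/
def IsSignVector (n : ℕ) (γ : ZMod n → ℝ) : Prop :=
  (∀ i, γ i = 1 ∨ γ i = -1) ∧ ∃ S : Finset (ZMod n), Odd S.card ∧ ∀ i, γ i = -1 ↔ i ∈ S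

/-- The noncontextuality functional `Ω_γ(p) = Σ_i γ(i) ⟨X_i X_{i+1}⟩_p`, where
`⟨X_i X_{i+1}⟩_p = Σ_{a,b} a·b·p_i(a,b)`. -/
noncomputable def OmegaNC (n : ℕ) [NeZero n] (γ : ZMod n → ℝ)
    (p : ZMod n → Bool → Bool → ℝ) : ℝ :=
  ∑ i : ZMod n, γ i * ∑ a : Bool, ∑ b : Bool, sval a * sval b * p i a b

/-- A type-preserving noncontextual wiring on the `n`-cycle scenario: a finite set `Λ`
(of natural numbers) with a probability distribution `ρ`; a finite set `R` with
pre-processing distributions `q j (·|λ)` on `R`; a context-selection map `g`; and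
post-processing distributions `m j (·|r, s, λ)` on `{-1,1}` (encoded as `Bool`). -/
structure NCWiring (n : ℕ) where
  Λ : Finset ℕ
  ρ : ℕ → ℝ
  ρ_nonneg : ∀ l ∈ Λ, 0 ≤ ρ l
  ρ_sum : ∑ l ∈ Λ, ρ l = 1
  R : Finset ℕ
  q : ZMod n → ℕ → ℕ → ℝ
  q_nonneg : ∀ j l r, 0 ≤ q j l r
  q_sum : ∀ j : ZMod n, ∀ l ∈ Λ, ∑ r ∈ R, q j l r = 1
  g : ZMod n → ℕ → ℕ → ZMod n
  m : ZMod n → ℕ → Bool → ℕ → Bool → ℝ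
  m_nonneg : ∀ j r s l t, 0 ≤ m j r s l t
  m_sum : ∀ j r s l, ∑ t : Bool, m j r s l t = 1

/-- The action of a noncontextual wiring on a behavior:
`(W(B))_i(t,t') = Σ_λ ρ(λ) Σ_{r,r'} q_i(r|λ) q_{i+1}(r'|λ)
  Σ_{s,s'} p_{g(i,r,r')}(s,s') m_i(t|r,s,λ) m_{i+1}(t'|r',s',λ)`. -/
def NCWiring.apply {n : ℕ} (W : NCWiring n) (p : ZMod n → Bool → Bool → ℝ) :
    ZMod n → Bool → Bool → ℝ :=
  fun i t t' => ∑ l ∈ W.Λ, W.ρ l * ∑ r ∈ W.R, ∑ r' ∈ W.R,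
    W.q i l r * W.q (i + 1) l r' * ∑ s : Bool, ∑ s' : Bool,
      p (W.g i r r') s s' * W.m i r s l t * W.m (i + 1) r' s' l t'

/-- A wiring is deterministic when every pre-processing distribution `q j (·|λ)` and
every post-processing distribution `m j (·|r,s,λ)` is a point mass. -/
def NCWiring.IsDeterministic {n : ℕ} (W : NCWiring n) : Prop :=
  (∀ j : ZMod n, ∀ l ∈ W.Λ, ∃ r₀ ∈ W.R, ∀ r ∈ W.R, W.q j l r = if r = r₀ then 1 else 0) ∧
  (∀ (j : ZMod n) (r : ℕ) (s : Bool) (l : ℕ),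
    ∃ t₀ : Bool, ∀ t : Bool, W.m j r s l t = if t = t₀ then 1 else 0)

/-- `B → B'`: some type-preserving noncontextual wiring maps `B` to `B'`. -/
def NCConvertsTo (n : ℕ) (B B' : ZMod n → Bool → Bool → ℝ) : Prop :=
  ∃ W : NCWiring n, W.apply B = B'

/-- The PR-like behavior for a sign vector `γ`: `(B_PR)_i(a,b) = (1 + γ(i)·a·b)/4`. -/
noncomputable def BPR (n : ℕ) (γ : ZMod n → ℝ) : ZMod n → Bool → Bool → ℝ :=
  fun i a b => (1 + γ i * sval a * sval b) / 4

/-- The noisy-PR behavior `B_NPR = ((n-2)/n)·B_PR + (2/n)·B_∅`, where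
`B_∅` is the maximally mixed behavior with all probabilities `1/4`. -/
noncomputable def BNPR (n : ℕ) (γ : ZMod n → ℝ) : ZMod n → Bool → Bool → ℝ :=
  fun i a b => (((n : ℝ) - 2) / (n : ℝ)) * BPR n γ i a b + (2 / (n : ℝ)) * (1 / 4)

/-- The interpolating family `F(α) = α·B_PR + (1-α)·B_NPR`. -/
noncomputable def Fmix (n : ℕ) (γ : ZMod n → ℝ) (α : ℝ) : ZMod n → Bool → Bool → ℝ :=
  fun i a b => α * BPR n γ i a b + (1 - α) * BNPR n γ i a b

section helpers

/-- marginalization of a product distribution onto two coordinates -/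
lemma marg2 {ι α : Type*} [Fintype ι] [DecidableEq ι] [DecidableEq α]
    (s : Finset α) (q : ι → α → ℝ) (hq : ∀ j, ∑ x ∈ s, q j x = 1)
    {i₁ i₂ : ι} (h12 : i₁ ≠ i₂) (T : α → α → ℝ) :
    ∑ f ∈ Fintype.piFinset (fun _ : ι => s), (∏ j, q j (f j)) * T (f i₁) (f i₂)
      = ∑ x ∈ s, ∑ y ∈ s, q i₁ x * q i₂ y * T x y := by
  set comb : (ι → α) → α → α → ℝ := fun f x y =>
    (∏ j, (q j (f j) * (if j = i₁ then (if f j = x then 1 else 0)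
      else if j = i₂ then (if f j = y then 1 else 0) else 1))) with hcomb
  have hprod_pair : ∀ (A B : ι → ℝ), (∏ j, (if j = i₁ then A j else if j = i₂ then B j else 1))
      = A i₁ * B i₂ := by
    intro A B
    rw [← Finset.prod_subset (Finset.subset_univ ({i₁, i₂} : Finset ι))
      (fun j _ hj => by
        simp only [Finset.mem_insert, Finset.mem_singleton] at hj
        push_neg at hj
        simp [if_neg hj.1, if_neg hj.2])]
    rw [Finset.prod_pair h12]
    simp [if_neg (Ne.symm h12), h12]
  have key : ∀ x ∈ s, ∀ y ∈ s, (∑ f ∈ Fintype.piFinset (fun _ : ι => s), comb f x y)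
      = q i₁ x * q i₂ y := by
    intro x hx y hy
    rw [hcomb, ← Finset.prod_univ_sum (fun _ => s)
      (fun j z => q j z * (if j = i₁ then (if z = x then 1 else 0)
        else if j = i₂ then (if z = y then 1 else 0) else 1))]
    have hfac : ∀ j : ι, (∑ z ∈ s, q j z * (if j = i₁ then (if z = x then 1 else 0)
        else if j = i₂ then (if z = y then 1 else 0) else 1))
        = (if j = i₁ then q i₁ x else if j = i₂ then q i₂ y else 1) := by
      intro j
      by_cases h1 : j = i₁
      · subst h1; simp only [eq_self_iff_true, if_true]
        rw [Finset.sum_congr rfl (fun z _ => by rw [mul_ite, mul_one, mul_zero])]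
        simp [Finset.sum_ite_eq', hx]
      · by_cases h2 : j = i₂
        · subst h2; simp only [if_neg h1, eq_self_iff_true, if_true]
          rw [Finset.sum_congr rfl (fun z _ => by rw [mul_ite, mul_one, mul_zero])]
          simp [Finset.sum_ite_eq', hy]
        · simp only [if_neg h1, if_neg h2, mul_one, hq j]
    rw [Finset.prod_congr rfl (fun j _ => hfac j), hprod_pair]
  calc ∑ f ∈ Fintype.piFinset (fun _ : ι => s), (∏ j, q j (f j)) * T (f i₁) (f i₂)
      = ∑ f ∈ Fintype.piFinset (fun _ : ι => s), ∑ x ∈ s, ∑ y ∈ s, comb f x y * T x y := by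
        refine Finset.sum_congr rfl (fun f hf => ?_)
        have hf1 : f i₁ ∈ s := Fintype.mem_piFinset.mp hf i₁
        have hf2 : f i₂ ∈ s := Fintype.mem_piFinset.mp hf i₂
        have hsplit : ∀ x y : α, comb f x y * T x y
            = if f i₂ = y then (if f i₁ = x then (∏ j, q j (f j)) * T x y else 0) else 0 := by
          intro x y
          rw [hcomb]
          simp only
          rw [Finset.prod_mul_distrib, hprod_pair]
          split_ifs <;> ring
        rw [Finset.sum_congr rfl (fun x _ => Finset.sum_congr rfl (fun y _ => hsplit x y))]
        rw [Finset.sum_congr rfl (fun x _ => Finset.sum_ite_eq s (f i₂) _)]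
        simp only [hf2, if_true]
        rw [Finset.sum_ite_eq s (f i₁) _]
        simp only [hf1, if_true]
      _ = ∑ x ∈ s, ∑ y ∈ s, q i₁ x * q i₂ y * T x y := by
        rw [Finset.sum_comm]
        refine Finset.sum_congr rfl (fun x hx => ?_)
        rw [Finset.sum_comm]
        refine Finset.sum_congr rfl (fun y hy => ?_)
        rw [← Finset.sum_mul, key x hx y hy]


lemma convex_bound {A : Type*} (s : Finset A) (w v : A → ℝ) (Bd : ℝ)
    (hw : ∀ a ∈ s, 0 ≤ w a) (h1 : ∑ a ∈ s, w a = 1) (hv : ∀ a ∈ s, v a ≤ Bd) :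
    ∑ a ∈ s, w a * v a ≤ Bd := by
  calc ∑ a ∈ s, w a * v a ≤ ∑ a ∈ s, w a * Bd :=
        Finset.sum_le_sum (fun a ha => mul_le_mul_of_nonneg_left (hv a ha) (hw a ha))
    _ = Bd := by rw [← Finset.sum_mul, h1, one_mul]

section zmod
variable {n : ℕ} [NeZero n]

lemma pm_parity_sum (s : ZMod n → ℝ) (h : ∀ i, s i = 1 ∨ s i = -1)
    (hp : ∏ i : ZMod n, s i = -1) : ∑ i : ZMod n, s i ≤ (n : ℝ) - 2 := by
  have hex : ∃ i₀ : ZMod n, s i₀ = -1 := by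
    by_contra hc
    push_neg at hc
    have : ∀ i : ZMod n, s i = 1 := fun i => (h i).resolve_right (hc i)
    rw [Finset.prod_congr rfl (fun i _ => this i), Finset.prod_const_one] at hp
    norm_num at hp
  obtain ⟨i₀, hi₀⟩ := hex
  have hcard : (Finset.univ : Finset (ZMod n)).card = n := by
    rw [Finset.card_univ, ZMod.card]
  calc ∑ i : ZMod n, s i = s i₀ + ∑ i ∈ Finset.univ.erase i₀, s i :=
        (Finset.add_sum_erase _ _ (Finset.mem_univ i₀)).symm
    _ ≤ -1 + ∑ i ∈ Finset.univ.erase i₀, 1 := by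
        rw [hi₀]
        gcongr with i hi
        rcases h i with h1 | h1 <;> rw [h1] <;> norm_num
    _ = (n : ℝ) - 2 := by
        rw [Finset.sum_const, Finset.card_erase_of_mem (Finset.mem_univ i₀), hcard]
        have h3 : 1 ≤ n := Nat.one_le_iff_ne_zero.mpr (NeZero.ne n)
        rw [nsmul_eq_mul, mul_one, Nat.cast_sub h3]
        push_cast
        ring

lemma zmod_reindex (f : ZMod n → ℝ) : ∑ i : ZMod n, f (i + 1) = ∑ i : ZMod n, f i :=
  Fintype.sum_equiv (Equiv.addRight 1) _ _ (fun _ => rfl)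

lemma zmod_prod_reindex (f : ZMod n → ℝ) : ∏ i : ZMod n, f (i + 1) = ∏ i : ZMod n, f i :=
  Fintype.prod_equiv (Equiv.addRight 1) _ _ (fun _ => rfl)

lemma zmod_const (f : ZMod n → ℝ) (h : ∀ i : ZMod n, f (i + 1) = f i) (a b : ZMod n) :
    f a = f b := by
  have key : ∀ m : ℕ, f (a + (m : ZMod n)) = f a := by
    intro m
    induction m with
    | zero => simp
    | succ k ih => push_cast; rw [← add_assoc, h (a + k)]; push_cast at ih; exact ih
  have hb : a + ((b - a).val : ZMod n) = b := by
    rw [ZMod.natCast_rightInverse (b - a)]; ring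
  rw [← hb, key]

/-- around the cycle, a nonconstant 0/1 function has at least two "jumps" -/
lemma cycle_jumps (χ : ZMod n → ℝ) (hvals : ∀ j, χ j = 0 ∨ χ j = 1)
    {j₀ j₁ : ZMod n} (h0 : χ j₀ = 0) (h1 : χ j₁ = 1) :
    2 ≤ ∑ i : ZMod n, |χ (i + 1) - χ i| := by
  have hsum0 : ∑ i : ZMod n, (χ (i + 1) - χ i) = 0 := by
    rw [Finset.sum_sub_distrib, zmod_reindex χ, sub_self]
  have hex : ∃ i₁ : ZMod n, χ (i₁ + 1) - χ i₁ ≠ 0 := by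
    by_contra hc
    push_neg at hc
    have : χ j₀ = χ j₁ := zmod_const χ (fun i => by have := hc i; linarith) j₀ j₁
    rw [h0, h1] at this; norm_num at this
  obtain ⟨i₁, hi₁⟩ := hex
  have habs : |χ (i₁ + 1) - χ i₁| = 1 := by
    rcases hvals (i₁ + 1) with h' | h' <;> rcases hvals i₁ with h'' | h'' <;>
      rw [h', h''] at hi₁ ⊢ <;> revert hi₁ <;> norm_num
  have hrest : ∑ i ∈ Finset.univ.erase i₁, (χ (i + 1) - χ i) = -(χ (i₁ + 1) - χ i₁) := by
    have h2 := Finset.add_sum_erase Finset.univ (fun i => χ (i + 1) - χ i) (Finset.mem_univ i₁)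
    linarith [hsum0, h2]
  calc (2 : ℝ) = 1 + 1 := by norm_num
    _ ≤ |χ (i₁ + 1) - χ i₁| + |∑ i ∈ Finset.univ.erase i₁, (χ (i + 1) - χ i)| := by
        rw [habs, hrest, abs_neg, habs]
    _ ≤ |χ (i₁ + 1) - χ i₁| + ∑ i ∈ Finset.univ.erase i₁, |χ (i + 1) - χ i| := by
        gcongr
        exact Finset.abs_sum_le_sum_abs _ _
    _ = ∑ i : ZMod n, |χ (i + 1) - χ i| := by
        have h2 := Finset.add_sum_erase Finset.univ (fun i => |χ (i + 1) - χ i|) (Finset.mem_univ i₁)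
        linarith [h2]
end zmod

def svert (d : Bool × Bool) (s : Bool) : ℝ := if s then sval d.1 else sval d.2

lemma svert_pm (d : Bool × Bool) (s : Bool) : svert d s = 1 ∨ svert d s = -1 := by
  cases s <;> cases hd1 : d.1 <;> cases hd2 : d.2 <;> simp [svert, sval, hd1, hd2]

lemma pull1 {A B : Type*} (t : Finset A) (s : Finset B) (G : A → ℝ) (F : B → A → ℝ) :
    ∑ a ∈ t, G a * ∑ r ∈ s, F r a = ∑ r ∈ s, ∑ a ∈ t, G a * F r a := by
  simp only [Finset.mul_sum]; exact Finset.sum_comm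

section master
variable {n : ℕ} [NeZero n]

lemma master (hn : 3 ≤ n) (γ : ZMod n → ℝ) (κ : ℝ)
    (p : ZMod n → Bool → Bool → ℝ) (Bd : ℝ)
    (hvert : ∀ (k : ZMod n → ZMod n) (σ : ZMod n → Bool → ℝ),
      (∀ j s, σ j s = 1 ∨ σ j s = -1) →
      ∑ i : ZMod n, ∑ s : Bool, ∑ s' : Bool,
        p (k i) s s' * (γ i * σ i s * σ (i+1) s' + κ * σ i s) ≤ Bd)
    (W : NCWiring n) :
    ∑ i : ZMod n, ∑ a : Bool, ∑ b : Bool,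
      (γ i * sval a * sval b + κ * sval a) * W.apply p i a b ≤ Bd := by
  classical
  haveI : Fact (1 < n) := ⟨by omega⟩
  have hne : ∀ i : ZMod n, i ≠ i + 1 := by
    intro i h
    have h1 : (0 : ZMod n) = 1 := by
      have := add_left_cancel (a := i) (b := 0) (c := 1) (by rw [add_zero, ← h])
      exact this
    exact one_ne_zero h1.symm
  -- the "correlator" of each post-processing distribution
  set c : ℕ → ZMod n → ℕ → Bool → ℝ := fun l j r s => ∑ t : Bool, sval t * W.m j r s l t
    with hc
  set u : ℕ → ZMod n → ℕ → Bool → ℝ := fun l j r s => ∑ t : Bool, W.m j r s l t with hu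
  have hudef : ∀ l j r s, u l j r s = 1 := fun l j r s => W.m_sum j r s l
  have hc_bound : ∀ l j r s, -1 ≤ c l j r s ∧ c l j r s ≤ 1 := by
    intro l j r s
    have h1 := W.m_sum j r s l
    have h2 := W.m_nonneg j r s l true
    have h3 := W.m_nonneg j r s l false
    rw [Fintype.sum_bool] at h1
    rw [hc]
    simp only [Fintype.sum_bool, sval]
    norm_num
    constructor <;> linarith
  set S : Finset (ℕ × Bool × Bool) := W.R ×ˢ (Finset.univ : Finset (Bool × Bool)) with hS
  set Q : ℕ → ZMod n → (ℕ × Bool × Bool) → ℝ := fun l j x =>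
    W.q j l x.1 * ((1 + sval x.2.1 * c l j x.1 true)/2) * ((1 + sval x.2.2 * c l j x.1 false)/2)
    with hQ
  set T : ℕ → ZMod n → (ℕ × Bool × Bool) → (ℕ × Bool × Bool) → ℝ := fun l i x y =>
    ∑ s : Bool, ∑ s' : Bool, p (W.g i x.1 y.1) s s' *
      (γ i * svert x.2 s * svert y.2 s' + κ * svert x.2 s) with hT
  have hQnn : ∀ l j x, 0 ≤ Q l j x := by
    intro l j x
    have hb1 := hc_bound l j x.1 true
    have hb2 := hc_bound l j x.1 false
    rw [hQ]
    refine mul_nonneg (mul_nonneg (W.q_nonneg j l x.1) ?_) ?_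
    · rcases Bool.dichotomy x.2.1 with h | h <;> rw [h] <;> simp [sval] <;> linarith [hb1.1, hb1.2]
    · rcases Bool.dichotomy x.2.2 with h | h <;> rw [h] <;> simp [sval] <;> linarith [hb2.1, hb2.2]
  have hQ1 : ∀ l ∈ W.Λ, ∀ j, ∑ x ∈ S, Q l j x = 1 := by
    intro l hl j
    rw [hS, Finset.sum_product]
    have inner : ∀ r : ℕ, ∑ d : Bool × Bool, Q l j (r, d) = W.q j l r := by
      intro r
      rw [Fintype.sum_prod_type]
      simp only [hQ, Fintype.sum_bool, sval]
      norm_num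
      ring
    rw [Finset.sum_congr rfl (fun r _ => inner r)]
    exact W.q_sum j l hl
  -- step key0: express the functional in terms of the correlators c
  have key0 : ∑ i : ZMod n, ∑ a : Bool, ∑ b : Bool,
      (γ i * sval a * sval b + κ * sval a) * W.apply p i a b
      = ∑ l ∈ W.Λ, W.ρ l * ∑ i : ZMod n, ∑ r ∈ W.R, ∑ r' ∈ W.R,
          W.q i l r * W.q (i+1) l r' * ∑ s : Bool, ∑ s' : Bool,
            p (W.g i r r') s s' *
              (γ i * c l i r s * c l (i+1) r' s' + κ * c l i r s) := by
    have inner : ∀ (l : ℕ) (i : ZMod n),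
        (∑ a : Bool, ∑ b : Bool, (γ i * sval a * sval b + κ * sval a) *
          (∑ r ∈ W.R, ∑ r' ∈ W.R, W.q i l r * W.q (i+1) l r' *
            ∑ s : Bool, ∑ s' : Bool,
              p (W.g i r r') s s' * W.m i r s l a * W.m (i+1) r' s' l b))
        = ∑ r ∈ W.R, ∑ r' ∈ W.R, W.q i l r * W.q (i+1) l r' *
            ∑ s : Bool, ∑ s' : Bool, p (W.g i r r') s s' *
              (γ i * c l i r s * c l (i+1) r' s' + κ * c l i r s * u l (i+1) r' s') := by
      intro l i
      simp only [Fintype.sum_bool, Finset.mul_sum, ← Finset.sum_add_distrib]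
      refine Finset.sum_congr rfl fun r _ => Finset.sum_congr rfl fun r' _ => ?_
      simp only [hc, hu, Fintype.sum_bool, sval]
      norm_num
      ring
    simp only [NCWiring.apply]
    rw [Finset.sum_congr rfl (fun i (_ : i ∈ Finset.univ) => Finset.sum_congr rfl
      (fun a (_ : a ∈ Finset.univ) => pull1 Finset.univ W.Λ _ _))]
    rw [Finset.sum_congr rfl (fun i (_ : i ∈ Finset.univ) => Finset.sum_comm)]
    rw [Finset.sum_comm]
    refine Finset.sum_congr rfl fun l hl => ?_
    rw [Finset.mul_sum]
    refine Finset.sum_congr rfl fun i _ => ?_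
    trans (W.ρ l * ∑ a : Bool, ∑ b : Bool, (γ i * sval a * sval b + κ * sval a) *
      (∑ r ∈ W.R, ∑ r' ∈ W.R, W.q i l r * W.q (i+1) l r' *
        ∑ s : Bool, ∑ s' : Bool,
          p (W.g i r r') s s' * W.m i r s l a * W.m (i+1) r' s' l b))
    · rw [Finset.mul_sum]
      refine Finset.sum_congr rfl fun a _ => ?_
      rw [Finset.mul_sum]
      refine Finset.sum_congr rfl fun b _ => ?_
      ring
    · rw [inner l i]
      congr 1
      refine Finset.sum_congr rfl fun r _ => Finset.sum_congr rfl fun r' _ => ?_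
      congr 1
      refine Finset.sum_congr rfl fun s _ => Finset.sum_congr rfl fun s' _ => ?_
      rw [hudef]
      ring
  -- step key1: express each (l,i) term through the vertex weights Q and values T
  have key1 : ∀ l : ℕ, ∀ i : ZMod n,
      ∑ x ∈ S, ∑ y ∈ S, Q l i x * Q l (i+1) y * T l i x y
      = ∑ r ∈ W.R, ∑ r' ∈ W.R, W.q i l r * W.q (i+1) l r' *
          ∑ s : Bool, ∑ s' : Bool, p (W.g i r r') s s' *
            (γ i * c l i r s * c l (i+1) r' s' + κ * c l i r s) := by
    intro l i
    rw [hS]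
    simp only [Finset.sum_product]
    rw [Finset.sum_congr rfl (fun r (_ : r ∈ W.R) => Finset.sum_comm)]
    refine Finset.sum_congr rfl fun r _ => Finset.sum_congr rfl fun r' _ => ?_
    simp only [hQ, hT, hc, svert, Fintype.sum_prod_type, Fintype.sum_bool, sval]
    norm_num
    ring
  -- step key2: piFinset expansion
  have key2 : ∀ l ∈ W.Λ,
      ∑ i : ZMod n, ∑ x ∈ S, ∑ y ∈ S, Q l i x * Q l (i+1) y * T l i x y
      = ∑ f ∈ Fintype.piFinset (fun _ : ZMod n => S),
          (∏ j : ZMod n, Q l j (f j)) * ∑ i : ZMod n, T l i (f i) (f (i+1)) := by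
    intro l hl
    refine Eq.symm ?_
    rw [Finset.sum_congr rfl (fun f _ => Finset.mul_sum _ _ _), Finset.sum_comm]
    exact Finset.sum_congr rfl (fun i _ => marg2 S (Q l) (hQ1 l hl) (hne i) (T l i))
  -- assemble
  rw [key0]
  rw [Finset.sum_congr rfl (fun l hl => by
    rw [Finset.sum_congr rfl (fun i (_ : i ∈ Finset.univ) => (key1 l i).symm), key2 l hl])]
  refine convex_bound W.Λ W.ρ _ Bd W.ρ_nonneg W.ρ_sum (fun l hl => ?_)
  refine convex_bound _ _ _ Bd (fun f _ => Finset.prod_nonneg (fun j _ => hQnn l j (f j)))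
    ?_ (fun f hf => ?_)
  · rw [← Finset.prod_univ_sum]
    rw [Finset.prod_congr rfl (fun j _ => hQ1 l hl j)]
    exact Finset.prod_const_one
  · exact hvert (fun i => W.g i (f i).1 (f (i+1)).1) (fun j s => svert (f j).2 s)
      (fun j s => svert_pm (f j).2 s)
end master

/-! ### The two incomparable behaviors -/

/-- the sign vector with a single `-1` at position `0` -/
noncomputable def gamF (n : ℕ) : ZMod n → ℝ := fun i => if i = 0 then -1 else 1

/-- `B₁ = ((n-1)/n)·PR + (1/n)·noise` : correlators `((n-1)/n)·γ`, no marginals -/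
noncomputable def Bone (n : ℕ) : ZMod n → Bool → Bool → ℝ :=
  fun i a b => (1 + (((n:ℝ)-1)/(n:ℝ)) * gamF n i * sval a * sval b)/4

/-- `B₂ = (1/4)·PR + (3/4)·(deterministic all-true)` -/
noncomputable def Btwo (n : ℕ) : ZMod n → Bool → Bool → ℝ :=
  fun i a b => (1 + gamF n i * sval a * sval b)/16 + (3/4) * (if a && b then 1 else 0)

section app
variable {n : ℕ} [NeZero n]

lemma gam_pm (i : ZMod n) : gamF n i = 1 ∨ gamF n i = -1 := by
  by_cases h : i = 0 <;> simp [gamF, h]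

lemma hcardZ : (Finset.univ : Finset (ZMod n)).card = n := by
  rw [Finset.card_univ, ZMod.card]

lemma gam_prod : ∏ i : ZMod n, gamF n i = -1 := by
  rw [Finset.prod_eq_single 0 (fun b _ hb => by simp [gamF, hb])
    (fun h => absurd (Finset.mem_univ _) h)]
  simp [gamF]

lemma gam_sum : ∑ i : ZMod n, gamF n i = (n : ℝ) - 2 := by
  have : ∀ i : ZMod n, gamF n i = 1 - (if i = 0 then (2:ℝ) else 0) := by
    intro i; by_cases h : i = 0 <;> simp [gamF, h] <;> norm_num
  rw [Finset.sum_congr rfl (fun i _ => this i), Finset.sum_sub_distrib,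
    Finset.sum_const, hcardZ, nsmul_eq_mul, mul_one, Finset.sum_ite_eq' Finset.univ 0]
  simp

variable (hn : 3 ≤ n)
include hn

lemma hnR : (3:ℝ) ≤ (n:ℝ) := by exact_mod_cast hn
lemma hn0 : (n:ℝ) ≠ 0 := by have := hnR hn; linarith
lemma hcc0 : 0 ≤ ((n:ℝ)-1)/(n:ℝ) := by
  have := hnR hn
  apply div_nonneg <;> linarith
lemma hcc1 : ((n:ℝ)-1)/(n:ℝ) ≤ 1 := by
  have h := hnR hn
  rw [div_le_one (by linarith)]; linarith

/-- vertex bound for `B₂` with the pure-correlator functional -/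
lemma vertA (k : ZMod n → ZMod n) (σ : ZMod n → Bool → ℝ)
    (pm : ∀ j s, σ j s = 1 ∨ σ j s = -1) :
    ∑ i : ZMod n, ∑ s : Bool, ∑ s' : Bool,
      Btwo n (k i) s s' * (gamF n i * σ i s * σ (i+1) s' + 0 * σ i s)
      ≤ (n:ℝ) - 3/2 := by
  have edge : ∀ i : ZMod n, (∑ s : Bool, ∑ s' : Bool,
      Btwo n (k i) s s' * (gamF n i * σ i s * σ (i+1) s' + 0 * σ i s))
      ≤ 1/4 + 3/4 * (gamF n i * σ i true * σ (i+1) true) := by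
    intro i
    rcases pm i true with h1|h1 <;> rcases pm i false with h2|h2 <;>
      rcases pm (i+1) true with h3|h3 <;> rcases pm (i+1) false with h4|h4 <;>
      rcases gam_pm (n := n) i with h5|h5 <;> rcases gam_pm (n := n) (k i) with h6|h6 <;>
      simp only [Btwo, Fintype.sum_bool, sval, h1, h2, h3, h4, h5, h6,
        Bool.and_self, Bool.and_true, Bool.true_and, Bool.and_false, Bool.false_and,
        if_true, if_false] <;> norm_num
  have spm : ∀ i : ZMod n, gamF n i * σ i true * σ (i+1) true = 1 ∨
      gamF n i * σ i true * σ (i+1) true = -1 := by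
    intro i
    rcases gam_pm (n := n) i with h5|h5 <;> rcases pm i true with h1|h1 <;>
      rcases pm (i+1) true with h3|h3 <;> rw [h5, h1, h3] <;> norm_num
  have hsq : (∏ i : ZMod n, σ i true) * (∏ i : ZMod n, σ i true) = 1 := by
    rw [← Finset.prod_mul_distrib]
    exact Finset.prod_eq_one (fun i _ => by rcases pm i true with h|h <;> rw [h] <;> norm_num)
  have sprod : ∏ i : ZMod n, gamF n i * σ i true * σ (i+1) true = -1 := by
    rw [Finset.prod_mul_distrib, Finset.prod_mul_distrib, gam_prod,
      zmod_prod_reindex (fun j => σ j true), mul_assoc, hsq]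
    norm_num
  calc ∑ i : ZMod n, ∑ s : Bool, ∑ s' : Bool,
        Btwo n (k i) s s' * (gamF n i * σ i s * σ (i+1) s' + 0 * σ i s)
      ≤ ∑ i : ZMod n, (1/4 + 3/4 * (gamF n i * σ i true * σ (i+1) true)) :=
        Finset.sum_le_sum (fun i _ => edge i)
    _ = (n:ℝ)/4 + 3/4 * ∑ i : ZMod n, gamF n i * σ i true * σ (i+1) true := by
        rw [Finset.sum_add_distrib, Finset.sum_const, hcardZ, nsmul_eq_mul, ← Finset.mul_sum]
        ring
    _ ≤ (n:ℝ)/4 + 3/4 * ((n:ℝ) - 2) := by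
        have := pm_parity_sum _ spm sprod
        linarith
    _ = (n:ℝ) - 3/2 := by ring
/-- vertex bound for `B₁` with the correlator+marginal functional -/
lemma vertB (k : ZMod n → ZMod n) (σ : ZMod n → Bool → ℝ)
    (pm : ∀ j s, σ j s = 1 ∨ σ j s = -1) :
    ∑ i : ZMod n, ∑ s : Bool, ∑ s' : Bool,
      Bone n (k i) s s' * (gamF n i * σ i s * σ (i+1) s' + 1/(n:ℝ) * σ i s)
      ≤ (n:ℝ) - 1 := by
  have hnn := hnR hn
  have h0 := hn0 hn
  have hc0 := hcc0 hn
  have hc1 := hcc1 hn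
  set cc : ℝ := ((n:ℝ)-1)/(n:ℝ) with hcc
  set x : ZMod n → ℝ := fun j => (σ j true + σ j false)/2 with hx
  set y : ZMod n → ℝ := fun j => (σ j true - σ j false)/2 with hy
  have hsite : ∀ j : ZMod n, (x j = 1 ∧ y j = 0) ∨ (x j = -1 ∧ y j = 0) ∨
      (x j = 0 ∧ y j = 1) ∨ (x j = 0 ∧ y j = -1) := by
    intro j
    rcases pm j true with h1|h1 <;> rcases pm j false with h2|h2 <;>
      rw [hx, hy] <;> simp only [h1, h2] <;> norm_num
  have hterm : ∀ i : ZMod n, (∑ s : Bool, ∑ s' : Bool,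
      Bone n (k i) s s' * (gamF n i * σ i s * σ (i+1) s' + 1/(n:ℝ) * σ i s))
      = gamF n i * (x i * x (i+1) + cc * gamF n (k i) * y i * y (i+1)) + 1/(n:ℝ) * x i := by
    intro i
    rw [hx, hy, hcc]
    simp only [Bone, Fintype.sum_bool, sval, if_true, if_false]
    norm_num
    ring
  rw [Finset.sum_congr rfl (fun i (_ : i ∈ Finset.univ) => hterm i)]
  by_cases hall : ∀ j : ZMod n, y j = 0
  · -- all sites are "x-type" : classical parity bound
    have hxpm : ∀ j : ZMod n, x j = 1 ∨ x j = -1 := by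
      intro j
      rcases hsite j with ⟨h,_⟩|⟨h,_⟩|⟨_,h⟩|⟨_,h⟩
      · exact Or.inl h
      · exact Or.inr h
      · rw [hall j] at h; norm_num at h
      · rw [hall j] at h; norm_num at h
    have spm : ∀ i : ZMod n, gamF n i * x i * x (i+1) = 1 ∨
        gamF n i * x i * x (i+1) = -1 := by
      intro i
      rcases gam_pm (n := n) i with h5|h5 <;> rcases hxpm i with h1|h1 <;>
        rcases hxpm (i+1) with h3|h3 <;> rw [h5, h1, h3] <;> norm_num
    have hsq : (∏ i : ZMod n, x i) * (∏ i : ZMod n, x i) = 1 := by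
      rw [← Finset.prod_mul_distrib]
      exact Finset.prod_eq_one (fun i _ => by rcases hxpm i with h|h <;> rw [h] <;> norm_num)
    have sprod : ∏ i : ZMod n, gamF n i * x i * x (i+1) = -1 := by
      rw [Finset.prod_mul_distrib, Finset.prod_mul_distrib, gam_prod,
        zmod_prod_reindex x, mul_assoc, hsq]
      norm_num
    have hparity := pm_parity_sum _ spm sprod
    have hxsum : ∑ i : ZMod n, x i ≤ (n:ℝ) := by
      calc ∑ i : ZMod n, x i ≤ ∑ _i : ZMod n, (1:ℝ) :=
            Finset.sum_le_sum (fun i _ => by rcases hxpm i with h|h <;> rw [h] <;> norm_num)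
        _ = (n:ℝ) := by rw [Finset.sum_const, hcardZ, nsmul_eq_mul, mul_one]
    calc ∑ i : ZMod n, (gamF n i * (x i * x (i+1) + cc * gamF n (k i) * y i * y (i+1))
            + 1/(n:ℝ) * x i)
        = ∑ i : ZMod n, (gamF n i * x i * x (i+1) + 1/(n:ℝ) * x i) := by
          refine Finset.sum_congr rfl fun i _ => ?_
          rw [hall i, hall (i+1)]
          ring
      _ = (∑ i : ZMod n, gamF n i * x i * x (i+1)) + 1/(n:ℝ) * ∑ i : ZMod n, x i := by
          rw [Finset.sum_add_distrib, ← Finset.mul_sum]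
      _ ≤ ((n:ℝ) - 2) + 1/(n:ℝ) * (n:ℝ) := by
          have h1n : 0 ≤ 1/(n:ℝ) := by positivity
          have := mul_le_mul_of_nonneg_left hxsum h1n
          linarith
      _ = (n:ℝ) - 1 := by rw [one_div_mul_cancel h0]; ring
  · -- some site is "y-type" : use the jump counting bound
    push_neg at hall
    obtain ⟨j₀, hj₀⟩ := hall
    have hxj₀ : x j₀ = 0 := by
      rcases hsite j₀ with ⟨h,h'⟩|⟨h,h'⟩|⟨h,_⟩|⟨h,_⟩ <;> first | exact h | exact absurd h' hj₀
    set χ : ZMod n → ℝ := fun j => (x j)^2 with hχdef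
    have hχ : ∀ j : ZMod n, χ j = 0 ∨ χ j = 1 := by
      intro j
      rcases hsite j with ⟨h,_⟩|⟨h,_⟩|⟨h,_⟩|⟨h,_⟩ <;> rw [hχdef] <;> simp only [h] <;> norm_num
    have hedge : ∀ i : ZMod n,
        gamF n i * (x i * x (i+1) + cc * gamF n (k i) * y i * y (i+1))
          ≤ χ i * χ (i+1) + cc * (1 - χ i) * (1 - χ (i+1)) := by
      intro i
      rcases gam_pm (n := n) i with h5|h5 <;> rcases gam_pm (n := n) (k i) with h6|h6 <;>
        rcases hsite i with ⟨ha,hb⟩|⟨ha,hb⟩|⟨ha,hb⟩|⟨ha,hb⟩ <;>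
        rcases hsite (i+1) with ⟨hc,hd⟩|⟨hc,hd⟩|⟨hc,hd⟩|⟨hc,hd⟩ <;>
        rw [hχdef] <;> simp only [h5, h6, ha, hb, hc, hd] <;> norm_num <;> linarith
    have hxχ : ∀ j : ZMod n, x j ≤ χ j := by
      intro j
      rcases hsite j with ⟨h,_⟩|⟨h,_⟩|⟨h,_⟩|⟨h,_⟩ <;> rw [hχdef] <;> simp only [h] <;> norm_num
    have hχsum : ∑ j : ZMod n, χ j ≤ (n:ℝ) := by
      calc ∑ j : ZMod n, χ j ≤ ∑ _j : ZMod n, (1:ℝ) :=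
            Finset.sum_le_sum (fun j _ => by rcases hχ j with h|h <;> rw [h] <;> norm_num)
        _ = (n:ℝ) := by rw [Finset.sum_const, hcardZ, nsmul_eq_mul, mul_one]
    have h1n : 0 ≤ 1/(n:ℝ) := by positivity
    by_cases hone : ∀ j : ZMod n, χ j = 0
    · -- everything y-type
      calc ∑ i : ZMod n, (gamF n i * (x i * x (i+1) + cc * gamF n (k i) * y i * y (i+1))
              + 1/(n:ℝ) * x i)
          ≤ ∑ _i : ZMod n, cc := by
            refine Finset.sum_le_sum fun i _ => ?_
            have h1 := hedge i
            rw [hone i, hone (i+1)] at h1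
            have h2 : x i ≤ χ i := hxχ i
            rw [hone i] at h2
            have := mul_le_mul_of_nonneg_left h2 h1n
            linarith
        _ = (n:ℝ) * cc := by rw [Finset.sum_const, hcardZ, nsmul_eq_mul]
        _ = (n:ℝ) - 1 := by rw [hcc]; field_simp
    · -- both types present: at least two jumps around the cycle
      push_neg at hone
      obtain ⟨j₁, hj₁⟩ := hone
      have hχj₁ : χ j₁ = 1 := (hχ j₁).resolve_left hj₁
      have hχj₀ : χ j₀ = 0 := by rw [hχdef]; simp only [hxj₀]; norm_num
      have hjump := cycle_jumps χ hχ hχj₀ hχj₁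
      have hcap : ∀ i : ZMod n, χ i * χ (i+1) + cc * (1 - χ i) * (1 - χ (i+1))
          ≤ 1 - |χ (i+1) - χ i| := by
        intro i
        rcases hχ i with h|h <;> rcases hχ (i+1) with h'|h' <;>
          rw [h, h'] <;> norm_num <;> linarith
      calc ∑ i : ZMod n, (gamF n i * (x i * x (i+1) + cc * gamF n (k i) * y i * y (i+1))
              + 1/(n:ℝ) * x i)
          ≤ ∑ i : ZMod n, ((1 - |χ (i+1) - χ i|) + 1/(n:ℝ) * χ i) := by
            refine Finset.sum_le_sum fun i _ => ?_
            have h1 := (hedge i).trans (hcap i)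
            have h2 := mul_le_mul_of_nonneg_left (hxχ i) h1n
            linarith
        _ = (n:ℝ) - (∑ i : ZMod n, |χ (i+1) - χ i|) + 1/(n:ℝ) * ∑ i : ZMod n, χ i := by
            rw [Finset.sum_add_distrib, Finset.sum_sub_distrib, Finset.sum_const, hcardZ,
              nsmul_eq_mul, mul_one, ← Finset.mul_sum]
        _ ≤ (n:ℝ) - 2 + 1/(n:ℝ) * (n:ℝ) := by
            have := mul_le_mul_of_nonneg_left hχsum h1n
            linarith
        _ = (n:ℝ) - 1 := by rw [one_div_mul_cancel h0]; ring

lemma Bone_beh : IsNCycleBehavior n (Bone n) := by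
  have hc0 := hcc0 hn
  have hc1 := hcc1 hn
  constructor
  · intro i a b
    rcases gam_pm (n := n) i with h|h <;> cases a <;> cases b <;>
      simp only [Bone, sval, h, if_true, if_false] <;> norm_num <;> linarith
  · intro i
    simp only [Bone, Fintype.sum_bool, sval, if_true, if_false]
    norm_num
    ring

lemma Bone_nd : NCycleNonDisturbing n (Bone n) := by
  intro i b
  cases b <;> simp only [Bone, Fintype.sum_bool, sval, if_true, if_false] <;> norm_num <;> ring

lemma Btwo_beh : IsNCycleBehavior n (Btwo n) := by
  constructor
  · intro i a b
    rcases gam_pm (n := n) i with h|h <;> cases a <;> cases b <;>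
      simp only [Btwo, sval, h, Bool.and_self, Bool.and_true, Bool.true_and,
        Bool.and_false, Bool.false_and, if_true, if_false] <;> norm_num
  · intro i
    simp only [Btwo, Fintype.sum_bool, sval, Bool.and_self, Bool.and_true, Bool.true_and,
      Bool.and_false, Bool.false_and, if_true, if_false]
    norm_num
    ring

lemma Btwo_nd : NCycleNonDisturbing n (Btwo n) := by
  intro i b
  cases b <;> simp only [Btwo, Fintype.sum_bool, sval, Bool.and_self, Bool.and_true,
    Bool.true_and, Bool.and_false, Bool.false_and, if_true, if_false] <;> norm_num <;> ring

lemma valBone : ∑ i : ZMod n, ∑ a : Bool, ∑ b : Bool,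
    (gamF n i * sval a * sval b + 0 * sval a) * Bone n i a b = (n:ℝ) - 1 := by
  have h0 := hn0 hn
  have key : ∀ i : ZMod n, (∑ a : Bool, ∑ b : Bool,
      (gamF n i * sval a * sval b + 0 * sval a) * Bone n i a b) = ((n:ℝ)-1)/(n:ℝ) := by
    intro i
    rcases gam_pm (n := n) i with h|h <;>
      simp only [Bone, Fintype.sum_bool, sval, h, if_true, if_false] <;> norm_num <;> ring
  rw [Finset.sum_congr rfl (fun i (_ : i ∈ Finset.univ) => key i), Finset.sum_const,
    hcardZ, nsmul_eq_mul]
  field_simp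

lemma valBtwo : ∑ i : ZMod n, ∑ a : Bool, ∑ b : Bool,
    (gamF n i * sval a * sval b + 1/(n:ℝ) * sval a) * Btwo n i a b = (n:ℝ) - 3/4 := by
  have h0 := hn0 hn
  have key : ∀ i : ZMod n, (∑ a : Bool, ∑ b : Bool,
      (gamF n i * sval a * sval b + 1/(n:ℝ) * sval a) * Btwo n i a b)
      = 1/4 + 3/4 * gamF n i + 3/4 * (1/(n:ℝ)) := by
    intro i
    rcases gam_pm (n := n) i with h|h <;>
      simp only [Btwo, Fintype.sum_bool, sval, h, Bool.and_self, Bool.and_true, Bool.true_and,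
        Bool.and_false, Bool.false_and, if_true, if_false] <;> norm_num <;> ring
  rw [Finset.sum_congr rfl (fun i (_ : i ∈ Finset.univ) => key i)]
  rw [Finset.sum_add_distrib, Finset.sum_add_distrib, Finset.sum_const, hcardZ,
    ← Finset.mul_sum, gam_sum, Finset.sum_const, hcardZ, nsmul_eq_mul]
  field_simp
  ring_nf
  rw [mul_inv_cancel₀ h0]
  ring

end app


/-- the convertibility pre-order induced by type-preserving
noncontextual wirings on non-disturbing `n`-cycle behaviors is not totally
pre-ordered: there exist incomparable non-disturbing behaviors `B₁`, `B₂`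
(neither `B₁ → B₂` nor `B₂ → B₁`). -/
theorem preorder_not_total (n : ℕ) [NeZero n] (hn : 3 ≤ n) :
    ∃ B₁ B₂ : ZMod n → Bool → Bool → ℝ,
      IsNCycleBehavior n B₁ ∧ NCycleNonDisturbing n B₁ ∧
      IsNCycleBehavior n B₂ ∧ NCycleNonDisturbing n B₂ ∧
      ¬ NCConvertsTo n B₁ B₂ ∧ ¬ NCConvertsTo n B₂ B₁ := by
  refine ⟨Bone n, Btwo n, Bone_beh hn, Bone_nd hn, Btwo_beh hn, Btwo_nd hn, ?_, ?_⟩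
  · rintro ⟨W, hW⟩
    have hb := master hn (gamF n) (1/(n:ℝ)) (Bone n) ((n:ℝ) - 1) (vertB hn) W
    rw [hW, valBtwo hn] at hb
    linarith
  · rintro ⟨W, hW⟩
    have hb := master hn (gamF n) 0 (Btwo n) ((n:ℝ) - 3/2) (vertA hn) W
    rw [hW, valBone hn] at hb
    linarith
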